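/- arXiv:2009.03069 — 2 statements merged into one kernel-verified Lean document; each statement's English description precedes it below -/
import Mathlib

section
/- Let (D_λ)_{λ∈Λ} be a family of nontrivial commutative rings and R = ∏_{λ∈Λ} D_λ. The following are equivalent: (a) (U) = {a ∈ R | S(a) ∈ U} is a maximal ideal of R for every ultrafilter U in B; (b) for every λ ∈ Λ, max(D_λ) is proconstructible in spec(D_λ), i.e. for every ultrafilter F on the set max(D_λ) the set X_F = {r ∈ D_λ | V(r) ∈ F} is a maximal ideal of D_λ; (c) every D_λ satisfies property (++), i.e. for every r ∈ D_λ there exists d ∈ D_λ with D(r) = V(d). -/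
/-!
Common setup: `Λ` is an index set, `D λ` a family of commutative rings,
`R = ∏ λ, D λ` the product ring, and
`B = ∏ λ, P(max (D λ))` the product Boolean algebra of the power sets of the
sets of maximal ideals, realized as the Pi type `∀ l, Set (MaximalSpectrum (D l))`
with its componentwise Boolean algebra structure (meet = componentwise ∩,
join = componentwise ∪, `⊥ = (∅)_λ`, complement componentwise, order = componentwise ⊆).
-/

variable {Λ : Type*} {D : Λ → Type*}

/-- `S(a) = (V(a_λ))_λ ∈ B`, where `V(x)` is the set of maximal ideals containing `x`. -/
def SFam [∀ l, CommRing (D l)] (a : ∀ l, D l) : ∀ l, Set (MaximalSpectrum (D l)) :=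
  fun l => {P | a l ∈ P.asIdeal}

/-- `z(x) = {λ | x_λ = 0}`. -/
def ZFam [∀ l, CommRing (D l)] (x : ∀ l, D l) : Set Λ := {l | x l = 0}

/-- A filter in a Boolean algebra: a nonempty subset not containing `⊥`, closed
under meets, and upward closed. -/
def IsBFilter {B : Type*} [BooleanAlgebra B] (U : Set B) : Prop :=
  U.Nonempty ∧ ⊥ ∉ U ∧ (∀ X ∈ U, ∀ Y ∈ U, X ⊓ Y ∈ U) ∧ (∀ Y ∈ U, ∀ Z, Y ≤ Z → Z ∈ U)

/-- An ultrafilter in a Boolean algebra: a filter containing `Y` or `Yᶜ` for every `Y`. -/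
def IsBUltrafilter {B : Type*} [BooleanAlgebra B] (U : Set B) : Prop :=
  IsBFilter U ∧ ∀ Y, Y ∈ U ∨ Yᶜ ∈ U

/-- Property (+): for all `r` and all nonzero `a` there is `d` lying in every maximal
ideal containing `a` but not `r`, and in no maximal ideal containing `r`. -/
def PropertyPlus (A : Type*) [CommRing A] : Prop :=
  ∀ r a : A, a ≠ 0 → ∃ d : A,
    (∀ M : Ideal A, M.IsMaximal → a ∈ M → r ∉ M → d ∈ M) ∧
    (∀ M : Ideal A, M.IsMaximal → r ∈ M → d ∉ M)

/-- Property (++): for every `r` there is `d` with `D(r) = V(d)`, i.e. the maximal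
ideals containing `d` are exactly those not containing `r`. -/
def PropertyPlusPlus (A : Type*) [CommRing A] : Prop :=
  ∀ r : A, ∃ d : A, ∀ P : MaximalSpectrum A, d ∈ P.asIdeal ↔ r ∉ P.asIdeal

open Filter

section PerRing

variable {A : Type*} [CommRing A] [Nontrivial A]

/-- If the maximal ideals containing `d` are exactly those avoiding `x`, then
`x` and `d` generate the unit ideal. -/
lemma aux_span_pair_top {x d : A}
    (h : ∀ P : MaximalSpectrum A, d ∈ P.asIdeal ↔ x ∉ P.asIdeal) :
    ∃ u v : A, u * x + v * d = 1 := by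
  have htop : Ideal.span ({x, d} : Set A) = ⊤ := by
    by_contra hne
    obtain ⟨P, hPmax, hle⟩ := Ideal.exists_le_maximal _ hne
    have hx : x ∈ P := hle (Ideal.subset_span (by simp))
    have hd : d ∈ P := hle (Ideal.subset_span (by simp))
    exact (h ⟨P, hPmax⟩).mp hd hx
  exact Ideal.mem_span_pair.mp (htop ▸ Submodule.mem_top)

/-- The ideal `X_F` of elements whose vanishing set lies in the ultrafilter. -/
def XFideal (F : Ultrafilter (MaximalSpectrum A)) : Ideal A where
  carrier := {r | {P : MaximalSpectrum A | r ∈ P.asIdeal} ∈ F}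
  zero_mem' := by
    have h : {P : MaximalSpectrum A | (0 : A) ∈ P.asIdeal} = Set.univ := by
      ext P; simp [P.asIdeal.zero_mem]
    show {P : MaximalSpectrum A | (0 : A) ∈ P.asIdeal} ∈ F
    rw [h]; exact univ_mem
  add_mem' := by
    intro a b ha hb
    have ha' : {P : MaximalSpectrum A | a ∈ P.asIdeal} ∈ F := ha
    have hb' : {P : MaximalSpectrum A | b ∈ P.asIdeal} ∈ F := hb
    show {P : MaximalSpectrum A | a + b ∈ P.asIdeal} ∈ F
    exact mem_of_superset (inter_mem ha' hb')
      (fun P hP => P.asIdeal.add_mem hP.1 hP.2)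
  smul_mem' := by
    intro c x hx
    have hx' : {P : MaximalSpectrum A | x ∈ P.asIdeal} ∈ F := hx
    show {P : MaximalSpectrum A | c • x ∈ P.asIdeal} ∈ F
    exact mem_of_superset hx' (fun P hP => by
      rw [smul_eq_mul]; exact P.asIdeal.mul_mem_left c hP)

lemma mem_XFideal {F : Ultrafilter (MaximalSpectrum A)} {r : A} :
    r ∈ XFideal F ↔ {P : MaximalSpectrum A | r ∈ P.asIdeal} ∈ F := Iff.rfl

lemma one_notmem_XFideal (F : Ultrafilter (MaximalSpectrum A)) : (1 : A) ∉ XFideal F := by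
  rw [mem_XFideal]
  have h : {P : MaximalSpectrum A | (1 : A) ∈ P.asIdeal} = ∅ := by
    ext P
    simp only [Set.mem_setOf_eq, Set.mem_empty_iff_false, iff_false]
    exact fun h1 => P.isMaximal.ne_top ((Ideal.eq_top_iff_one _).mpr h1)
  rw [h]; exact Filter.empty_notMem (F : Filter (MaximalSpectrum A))

/-- Property (++) implies that `X_F` is maximal for every ultrafilter. -/
lemma pp_to_ultra (h : PropertyPlusPlus A) (F : Ultrafilter (MaximalSpectrum A)) :
    ∃ M : Ideal A, M.IsMaximal ∧
      ∀ r : A, r ∈ M ↔ {P : MaximalSpectrum A | r ∈ P.asIdeal} ∈ F := by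
  refine ⟨XFideal F, ?_, fun r => mem_XFideal⟩
  rw [Ideal.isMaximal_iff]
  refine ⟨one_notmem_XFideal F, ?_⟩
  intro b x hle hxM hxb
  obtain ⟨d, hd⟩ := h x
  have hdM : d ∈ XFideal F := by
    rw [mem_XFideal]
    have hcompl : {P : MaximalSpectrum A | d ∈ P.asIdeal} =
        {P : MaximalSpectrum A | x ∈ P.asIdeal}ᶜ := by
      ext P; simpa using hd P
    rw [hcompl]
    exact Ultrafilter.compl_mem_iff_notMem.mpr hxM
  obtain ⟨u, v, huv⟩ := aux_span_pair_top hd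
  have hmem : u * x + v * d ∈ b := b.add_mem (b.mul_mem_left u hxb) (b.mul_mem_left v (hle hdM))
  rwa [huv] at hmem

/-- The ideal of elements lying in every maximal ideal avoiding `r`. -/
def Tideal (r : A) : Ideal A where
  carrier := {z | ∀ Q : MaximalSpectrum A, r ∉ Q.asIdeal → z ∈ Q.asIdeal}
  zero_mem' := fun Q _ => Q.asIdeal.zero_mem
  add_mem' := fun ha hb Q hQ => Q.asIdeal.add_mem (ha Q hQ) (hb Q hQ)
  smul_mem' := by
    intro c z hz Q hQ
    rw [smul_eq_mul]; exact Q.asIdeal.mul_mem_left c (hz Q hQ)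

lemma mem_Tideal {r z : A} :
    z ∈ Tideal r ↔ ∀ Q : MaximalSpectrum A, r ∉ Q.asIdeal → z ∈ Q.asIdeal := Iff.rfl

/-- If `X_F` is maximal for every ultrafilter, then property (++) holds. -/
lemma ultra_to_pp
    (h : ∀ F : Ultrafilter (MaximalSpectrum A), ∃ M : Ideal A, M.IsMaximal ∧
      ∀ r : A, r ∈ M ↔ {P : MaximalSpectrum A | r ∈ P.asIdeal} ∈ F) :
    PropertyPlusPlus A := by
  intro r
  have hsup : Tideal r ⊔ Ideal.span {r} = ⊤ := by
    by_contra hne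
    obtain ⟨P0, hP0max, hle⟩ := Ideal.exists_le_maximal _ hne
    have hrP0 : r ∈ P0 := hle (Ideal.mem_sup_right (Ideal.mem_span_singleton_self r))
    have hTP0 : ∀ z ∈ Tideal r, z ∈ P0 := fun z hz => hle (Ideal.mem_sup_left hz)
    have h1P0 : (1 : A) ∉ P0 := fun h1 => hP0max.ne_top ((Ideal.eq_top_iff_one _).mpr h1)
    by_cases hcase : ∃ z, z ∉ P0 ∧
        {Q : MaximalSpectrum A | r ∉ Q.asIdeal ∧ z ∉ Q.asIdeal} = ∅
    · obtain ⟨z, hz, hzempty⟩ := hcase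
      refine hz (hTP0 z ?_)
      intro Q hQ
      by_contra hzQ
      exact Set.eq_empty_iff_forall_notMem.mp hzempty Q ⟨hQ, hzQ⟩
    · push_neg at hcase
      set ι := {z : A // z ∉ P0} with hι
      haveI : Nonempty ι := ⟨⟨1, h1P0⟩⟩
      set Az : ι → Set (MaximalSpectrum A) :=
        fun z => {Q | r ∉ Q.asIdeal ∧ z.1 ∉ Q.asIdeal} with hAz
      have hdir : Directed (· ≥ ·) (fun z : ι => 𝓟 (Az z)) := by
        intro z w
        have hzw : z.1 * w.1 ∉ P0 := fun hmem => by
          rcases hP0max.isPrime.mem_or_mem hmem with h' | h'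
          · exact z.2 h'
          · exact w.2 h'
        refine ⟨⟨z.1 * w.1, hzw⟩, ?_, ?_⟩
        · refine principal_mono.mpr (fun Q hQ => ⟨hQ.1, fun h' => hQ.2 ?_⟩)
          exact Q.asIdeal.mul_mem_right w.1 h'
        · refine principal_mono.mpr (fun Q hQ => ⟨hQ.1, fun h' => hQ.2 ?_⟩)
          exact Q.asIdeal.mul_mem_left z.1 h'
      haveI hne' : ∀ z : ι, NeBot (𝓟 (Az z)) := fun z =>
        principal_neBot_iff.mpr (hcase z.1 z.2)
      haveI : NeBot (⨅ z : ι, 𝓟 (Az z)) := iInf_neBot_of_directed' hdir hne'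
      set F := Ultrafilter.of (⨅ z : ι, 𝓟 (Az z)) with hF
      have hAF : ∀ z : ι, Az z ∈ F := fun z =>
        Ultrafilter.of_le _ (mem_iInf_of_mem z (mem_principal_self _))
      obtain ⟨M, hMmax, hM⟩ := h F
      have hMP0 : M ≤ P0 := by
        intro z hz
        by_contra hzP0
        have h1 : {P : MaximalSpectrum A | z ∈ P.asIdeal} ∈ F := (hM z).mp hz
        have h2 : Az ⟨z, hzP0⟩ ∈ F := hAF ⟨z, hzP0⟩
        have hempty : {P : MaximalSpectrum A | z ∈ P.asIdeal} ∩ Az ⟨z, hzP0⟩ = ∅ := by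
          ext Q
          simp only [Set.mem_inter_iff, Set.mem_setOf_eq, Set.mem_empty_iff_false, iff_false]
          rintro ⟨h1', _, h2'⟩
          exact h2' h1'
        exact Filter.empty_notMem (F : Filter (MaximalSpectrum A)) (hempty ▸ inter_mem h1 h2)
      have hMeq : M = P0 := hMmax.eq_of_le hP0max.ne_top hMP0
      have hrM : {P : MaximalSpectrum A | r ∈ P.asIdeal} ∈ F :=
        (hM r).mp (hMeq ▸ hrP0)
      have h2 : Az ⟨1, h1P0⟩ ∈ F := hAF ⟨1, h1P0⟩
      have hempty : {P : MaximalSpectrum A | r ∈ P.asIdeal} ∩ Az ⟨1, h1P0⟩ = ∅ := by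
        ext Q
        simp only [Set.mem_inter_iff, Set.mem_setOf_eq, Set.mem_empty_iff_false, iff_false]
        rintro ⟨h1', h2', _⟩
        exact h2' h1'
      exact Filter.empty_notMem (F : Filter (MaximalSpectrum A)) (hempty ▸ inter_mem hrM h2)
  have h1 : (1 : A) ∈ Tideal r ⊔ Ideal.span {r} := hsup ▸ Submodule.mem_top
  obtain ⟨d, hdT, y, hy, hsum⟩ := Submodule.mem_sup.mp h1
  obtain ⟨b, hb⟩ := Ideal.mem_span_singleton'.mp hy
  refine ⟨d, fun P => ⟨?_, fun hrP => (mem_Tideal.mp hdT) P hrP⟩⟩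
  intro hdP hrP
  refine P.isMaximal.ne_top ((Ideal.eq_top_iff_one _).mpr ?_)
  have hmem : d + y ∈ P.asIdeal := P.asIdeal.add_mem hdP (by
    rw [← hb]; exact P.asIdeal.mul_mem_left b hrP)
  rwa [hsum] at hmem

end PerRing

section Product
variable {Λ : Type*} {D : Λ → Type*}

lemma pp_to_prod [∀ l, CommRing (D l)] [∀ l, Nontrivial (D l)]
    (hpp : ∀ l, PropertyPlusPlus (D l)) :
    ∀ U : Set (∀ l, Set (MaximalSpectrum (D l))), IsBUltrafilter U →
      ∃ I : Ideal (∀ l, D l), (∀ a, a ∈ I ↔ SFam a ∈ U) ∧ I.IsMaximal := by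
  intro U hU
  obtain ⟨⟨Y0, hY0⟩, hbot, hmeet, hup⟩ := hU.1
  have htop : (⊤ : ∀ l, Set (MaximalSpectrum (D l))) ∈ U := hup Y0 hY0 ⊤ le_top
  refine ⟨{
    carrier := {a | SFam a ∈ U}
    zero_mem' := by
      have h0 : SFam (0 : ∀ l, D l) = ⊤ := by
        funext l; ext P
        simp [SFam, Pi.top_apply, P.asIdeal.zero_mem]
      show SFam (0 : ∀ l, D l) ∈ U
      rw [h0]; exact htop
    add_mem' := by
      intro a b ha hb
      show SFam (a + b) ∈ U
      refine hup _ (hmeet _ ha _ hb) _ ?_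
      intro l P hP
      exact P.asIdeal.add_mem hP.1 hP.2
    smul_mem' := by
      intro c x hx
      show SFam (c • x) ∈ U
      refine hup _ hx _ ?_
      intro l P hP
      show c l * x l ∈ P.asIdeal
      exact P.asIdeal.mul_mem_left _ hP }, fun a => Iff.rfl, ?_⟩
  rw [Ideal.isMaximal_iff]
  constructor
  · show SFam (1 : ∀ l, D l) ∉ U
    have h1 : SFam (1 : ∀ l, D l) = ⊥ := by
      funext l; ext P
      simp only [SFam, Set.mem_setOf_eq, Pi.bot_apply, Set.bot_eq_empty,
        Set.mem_empty_iff_false, iff_false, Pi.one_apply]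
      exact fun h1 => P.isMaximal.ne_top ((Ideal.eq_top_iff_one _).mpr h1)
    rw [h1]; exact hbot
  · intro b x hle hxI hxb
    choose d hd using fun l => hpp l (x l)
    have hSd : SFam d = (SFam x)ᶜ := by
      funext l; ext P
      simp only [SFam, Set.mem_setOf_eq, Pi.compl_apply, Set.mem_compl_iff]
      exact hd l P
    have hdI : SFam d ∈ U := by
      rw [hSd]
      rcases hU.2 (SFam x) with hx' | hx'
      · exact absurd hx' hxI
      · exact hx'
    have hdb : d ∈ b := hle hdI
    choose u v huv using fun l => aux_span_pair_top (hd l)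
    have hmem : u * x + v * d ∈ b := b.add_mem (b.mul_mem_left u hxb) (b.mul_mem_left v hdb)
    have heq : u * x + v * d = 1 := funext fun l => huv l
    rwa [heq] at hmem

lemma prod_to_ultra [∀ l, CommRing (D l)] [∀ l, Nontrivial (D l)]
    (h : ∀ U : Set (∀ l, Set (MaximalSpectrum (D l))), IsBUltrafilter U →
      ∃ I : Ideal (∀ l, D l), (∀ a, a ∈ I ↔ SFam a ∈ U) ∧ I.IsMaximal) :
    ∀ l, ∀ F : Ultrafilter (MaximalSpectrum (D l)),
      ∃ M : Ideal (D l), M.IsMaximal ∧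
        ∀ r : D l, r ∈ M ↔ {P : MaximalSpectrum (D l) | r ∈ P.asIdeal} ∈ F := by
  classical
  intro l0 F
  set U : Set (∀ l, Set (MaximalSpectrum (D l))) := {Y | Y l0 ∈ F} with hUdef
  have hU : IsBUltrafilter U := by
    refine ⟨⟨⟨⊤, ?_⟩, ?_, ?_, ?_⟩, ?_⟩
    · show (⊤ : ∀ l, Set (MaximalSpectrum (D l))) l0 ∈ F
      rw [Pi.top_apply, Set.top_eq_univ]; exact univ_mem
    · show ¬ (⊥ : ∀ l, Set (MaximalSpectrum (D l))) l0 ∈ F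
      rw [Pi.bot_apply, Set.bot_eq_empty]
      exact Filter.empty_notMem (F : Filter (MaximalSpectrum (D l0)))
    · intro X hX Y hY
      show (X ⊓ Y) l0 ∈ F
      exact inter_mem hX hY
    · intro Y hY Z hYZ
      show Z l0 ∈ F
      exact mem_of_superset hY (hYZ l0)
    · intro Y
      by_cases hY : Y l0 ∈ F
      · exact Or.inl hY
      · right
        show (Yᶜ) l0 ∈ F
        rw [Pi.compl_apply]
        exact Ultrafilter.compl_mem_iff_notMem.mpr hY
  obtain ⟨I, hImem, hImax⟩ := h U hU
  have hkey : ∀ a : ∀ l, D l, a ∈ I ↔ {P : MaximalSpectrum (D l0) | a l0 ∈ P.asIdeal} ∈ F :=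
    fun a => hImem a
  refine ⟨XFideal F, ?_, fun r => mem_XFideal⟩
  rw [Ideal.isMaximal_iff]
  refine ⟨one_notmem_XFideal F, ?_⟩
  intro b x hle hxM hxb
  set a : ∀ l, D l := Function.update (0 : ∀ l, D l) l0 x with ha
  have hal0 : a l0 = x := Function.update_self _ _ _
  have haI : a ∉ I := by
    rw [hkey a, hal0]
    exact hxM
  obtain ⟨y, i, hiI, hyi⟩ := hImax.exists_inv haI
  have hil0 : i l0 ∈ XFideal F := (hkey i).mp hiI
  have heval : y l0 * x + i l0 = 1 := by
    have := congrFun hyi l0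
    simpa [hal0] using this
  have hmem : y l0 * x + i l0 ∈ b := b.add_mem (b.mul_mem_left _ hxb) (hle hil0)
  rwa [heval] at hmem

end Product

/-- Equivalence of: (a) `(U)` is a maximal ideal of `R` for every ultrafilter `U` in
`B`; (b) every set of maximal ideals of `D l` is proconstructible in the prime
spectrum (for every ultrafilter `F` on the set of maximal ideals, the set of `r` with
`V r ∈ F` is a maximal ideal); (c) every `D l` satisfies property (++). -/
theorem stmt_12 [∀ l, CommRing (D l)] [∀ l, Nontrivial (D l)] :
    ((∀ U : Set (∀ l, Set (MaximalSpectrum (D l))), IsBUltrafilter U →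
        ∃ I : Ideal (∀ l, D l), (∀ a, a ∈ I ↔ SFam a ∈ U) ∧ I.IsMaximal) ↔
      (∀ l, ∀ F : Ultrafilter (MaximalSpectrum (D l)),
        ∃ M : Ideal (D l), M.IsMaximal ∧
          ∀ r : D l, r ∈ M ↔ {P : MaximalSpectrum (D l) | r ∈ P.asIdeal} ∈ F)) ∧
    ((∀ l, ∀ F : Ultrafilter (MaximalSpectrum (D l)),
        ∃ M : Ideal (D l), M.IsMaximal ∧
          ∀ r : D l, r ∈ M ↔ {P : MaximalSpectrum (D l) | r ∈ P.asIdeal} ∈ F) ↔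
      (∀ l, PropertyPlusPlus (D l))) := by
  constructor
  · constructor
    · exact fun h => prod_to_ultra h
    · exact fun hb => pp_to_prod (fun l => ultra_to_pp (hb l))
  · constructor
    · exact fun hb l => ultra_to_pp (hb l)
    · exact fun hc l => pp_to_ultra (hc l)
end

section
/- Let (D_λ)_{λ∈Λ} be a family of integral domains and T a subring of R = ∏_{λ∈Λ} D_λ such that for every subset Z ⊆ Λ there exists x ∈ T with z(x) = Z. Then the map F ↦ (0)_F^T is a bijection between the set of ultrafilters on Λ and the set of minimal prime ideals of T. -/
/-!
Common setup: `Λ` is an index set, `D λ` a family of commutative rings,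
`R = ∏ λ, D λ` the product ring, and
`B = ∏ λ, P(max (D λ))` the product Boolean algebra of the power sets of the
sets of maximal ideals, realized as the Pi type `∀ l, Set (MaximalSpectrum (D l))`
with its componentwise Boolean algebra structure (meet = componentwise ∩,
join = componentwise ∪, `⊥ = (∅)_λ`, complement componentwise, order = componentwise ⊆).
-/

variable {Λ : Type*} {D : Λ → Type*}

section Aux

variable [∀ l, CommRing (D l)] [∀ l, IsDomain (D l)]

lemma ZFam_mul (x y : ∀ l, D l) : ZFam (x * y) = ZFam x ∪ ZFam y := by
  ext l; simp [ZFam, mul_eq_zero]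

lemma ZFam_zero : ZFam (0 : ∀ l, D l) = Set.univ := by
  ext l; simp [ZFam]

lemma ZFam_one : ZFam (1 : ∀ l, D l) = (∅ : Set Λ) := by
  ext l; simp [ZFam]

lemma ZFam_add (x y : ∀ l, D l) : ZFam x ∩ ZFam y ⊆ ZFam (x + y) := by
  rintro l ⟨hx, hy⟩
  simp only [ZFam, Set.mem_setOf_eq] at *
  simp [hx, hy]

/-- a minimal prime of `T` contains no everywhere-nonzero element. -/
lemma no_unitlike (T : Subring (∀ l, D l)) (I : Ideal T) (hmin : I ∈ minimalPrimes T) :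
    ∀ u : T, (∀ l, (u : ∀ l, D l) l ≠ 0) → u ∉ I := by
  intro u hu huI
  haveI hIp : I.IsPrime := hmin.1.1
  have h1 : algebraMap T (Localization I.primeCompl) u ∈ IsLocalRing.maximalIdeal _ :=
    (IsLocalization.AtPrime.to_map_mem_maximal_iff _ I u).mpr huI
  have h2 : IsNilpotent (algebraMap T (Localization I.primeCompl) u) :=
    by
      haveI := IsLocalization.subsingleton_primeSpectrum_of_mem_minimalPrimes I hmin
        (Localization I.primeCompl)
      rw [nilpotent_iff_mem_prime]
      intro J hJ
      have hJe : (⟨J, hJ⟩ : PrimeSpectrum (Localization I.primeCompl)) =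
          ⟨IsLocalRing.maximalIdeal _, inferInstance⟩ := Subsingleton.elim _ _
      rw [show J = IsLocalRing.maximalIdeal _ from congrArg PrimeSpectrum.asIdeal hJe]
      exact h1
  obtain ⟨n, hn⟩ := h2
  rw [← map_pow] at hn
  obtain ⟨m, hm⟩ :=
    (IsLocalization.map_eq_zero_iff I.primeCompl (Localization I.primeCompl) (u ^ n)).mp hn
  have hm0 : (m : T) = 0 := by
    apply Subtype.ext
    funext l
    have := congrFun (congrArg Subtype.val hm) l
    simp only [Subring.coe_mul, Subring.coe_pow, Pi.mul_apply, Pi.pow_apply,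
      ZeroMemClass.coe_zero, Pi.zero_apply] at this ⊢
    exact (mul_eq_zero.mp this).resolve_right (pow_ne_zero n (hu l))
  have : (m : T) ∉ I := m.2
  rw [hm0] at this
  exact this I.zero_mem

end Aux


/-- If the `D l` are integral domains and `T ⊆ R` is a subring such that every subset
of `Λ` is the zero set `z x` of some `x ∈ T`, then `F ↦ (0)_F^T` is a bijection
between ultrafilters on `Λ` and minimal prime ideals of `T`: it is well defined
(each such set is a minimal prime), injective, and surjective. -/
theorem stmt_15 [∀ l, CommRing (D l)] [∀ l, IsDomain (D l)]
    (T : Subring (∀ l, D l)) (hT : ∀ Z : Set Λ, ∃ x ∈ T, ZFam x = Z) :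
    (∀ F : Ultrafilter Λ, ∃ I : Ideal T, I ∈ minimalPrimes T ∧
      ∀ x : T, x ∈ I ↔ ZFam (x : ∀ l, D l) ∈ F) ∧
    (∀ F G : Ultrafilter Λ,
      (∀ x : T, ZFam (x : ∀ l, D l) ∈ F ↔ ZFam (x : ∀ l, D l) ∈ G) → F = G) ∧
    (∀ I : Ideal T, I ∈ minimalPrimes T →
      ∃ F : Ultrafilter Λ, ∀ x : T, x ∈ I ↔ ZFam (x : ∀ l, D l) ∈ F) := by
  classical
  have cmul : ∀ x y : T, ZFam ((x * y : T) : ∀ l, D l) =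
      ZFam (x : ∀ l, D l) ∪ ZFam (y : ∀ l, D l) := fun x y => ZFam_mul _ _
  have hz : ∀ (v : ∀ l, D l) {Z : Set Λ}, ZFam v = Z → ∀ {l}, l ∈ Z → v l = 0 := by
    intro v Z h l hl
    rw [← h] at hl
    exact hl
  have hnz : ∀ (v : ∀ l, D l) {Z : Set Λ}, ZFam v = Z → ∀ {l}, l ∉ Z → v l ≠ 0 := by
    intro v Z h l hl hv
    rw [← h] at hl
    exact hl hv
  -- a product of elements with complementary zero sets is 0
  have hcompl0 : ∀ (x y : T) {Z : Set Λ}, ZFam (x : ∀ l, D l) = Z →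
      ZFam (y : ∀ l, D l) = Zᶜ → x * y = 0 := by
    intro x y Z hx hy
    apply Subtype.ext
    funext l
    simp only [Subring.coe_mul, Pi.mul_apply, ZeroMemClass.coe_zero, Pi.zero_apply]
    rcases Classical.em (l ∈ Z) with h | h
    · rw [hz _ hx h, zero_mul]
    · rw [hz _ hy h, mul_zero]
  refine ⟨?_, ?_, ?_⟩
  · -- Part 1: well-definedness
    intro F
    let IF : Ideal T :=
      { carrier := {x : T | ZFam (x : ∀ l, D l) ∈ F}
        zero_mem' := by
          simp only [Set.mem_setOf_eq, ZeroMemClass.coe_zero, ZFam_zero]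
          exact Filter.univ_mem
        add_mem' := by
          intro a b ha hb
          simp only [Set.mem_setOf_eq, AddMemClass.coe_add] at *
          exact Filter.mem_of_superset (Filter.inter_mem ha hb) (ZFam_add _ _)
        smul_mem' := by
          intro c x hx
          simp only [Set.mem_setOf_eq, smul_eq_mul] at *
          rw [cmul]
          exact Filter.mem_of_superset hx Set.subset_union_right }
    have hIFmem : ∀ x : T, x ∈ IF ↔ ZFam (x : ∀ l, D l) ∈ F := fun x => Iff.rfl
    refine ⟨IF, ?_, hIFmem⟩
    have hprime : IF.IsPrime := by
      constructor
      · intro h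
        have h1 : (1 : T) ∈ IF := by rw [h]; trivial
        rw [hIFmem, OneMemClass.coe_one, ZFam_one] at h1
        exact F.empty_notMem h1
      · intro a b hab
        rw [hIFmem, cmul, Ultrafilter.union_mem_iff] at hab
        exact hab.imp (hIFmem a).mpr (hIFmem b).mpr
    refine ⟨⟨hprime, bot_le⟩, ?_⟩
    intro J hJ hle x hx
    rw [hIFmem] at hx
    obtain ⟨y, hyT, hy⟩ := hT (ZFam (x : ∀ l, D l))ᶜ
    have hxy : x * (⟨y, hyT⟩ : T) = 0 := hcompl0 x ⟨y, hyT⟩ rfl hy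
    have : x * (⟨y, hyT⟩ : T) ∈ J := by rw [hxy]; exact J.zero_mem
    rcases hJ.1.mem_or_mem this with h | h
    · exact h
    · exfalso
      have := (hIFmem _).mp (hle h)
      rw [show ZFam ((⟨y, hyT⟩ : T) : ∀ l, D l) = (ZFam (x : ∀ l, D l))ᶜ from hy] at this
      exact (Ultrafilter.compl_mem_iff_notMem.mp this) hx
  · -- Part 2: injectivity
    intro F G h
    apply Ultrafilter.coe_injective
    apply Filter.ext
    intro s
    obtain ⟨x, hxT, hx⟩ := hT s
    have := h ⟨x, hxT⟩
    rwa [show ZFam ((⟨x, hxT⟩ : T) : ∀ l, D l) = s from hx] at this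
  · -- Part 3: surjectivity
    intro I hmin
    haveI hIp : I.IsPrime := hmin.1.1
    have hC := no_unitlike T I hmin
    set P : Set Λ → Prop := fun Z => ∃ x : T, x ∈ I ∧ ZFam (x : ∀ l, D l) = Z with hP
    have hPor : ∀ Z, P Z ∨ P Zᶜ := by
      intro Z
      obtain ⟨x, hxT, hx⟩ := hT Z
      obtain ⟨y, hyT, hy⟩ := hT Zᶜ
      have hxy : (⟨x, hxT⟩ : T) * ⟨y, hyT⟩ = 0 := hcompl0 _ _ hx hy
      have : (⟨x, hxT⟩ : T) * ⟨y, hyT⟩ ∈ I := by rw [hxy]; exact I.zero_mem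
      rcases hIp.mem_or_mem this with h | h
      · exact Or.inl ⟨⟨x, hxT⟩, h, hx⟩
      · exact Or.inr ⟨⟨y, hyT⟩, h, hy⟩
    have hPnot : ∀ Z, P Z → ¬ P Zᶜ := by
      rintro Z ⟨x, hxI, hx⟩ ⟨y, hyI, hy⟩
      apply hC (x + y) _ (I.add_mem hxI hyI)
      intro l
      simp only [AddMemClass.coe_add, Pi.add_apply]
      rcases Classical.em (l ∈ Z) with h | h
      · rw [hz _ hx h, zero_add]
        exact hnz _ hy (fun h' => h' h)
      · rw [hz _ hy (h : l ∈ Zᶜ), add_zero]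
        exact hnz _ hx h
    have memOfZ : ∀ x : T, x ∈ I → ∀ y : T,
        ZFam (y : ∀ l, D l) = ZFam (x : ∀ l, D l) → y ∈ I := by
      intro x hxI y hyx
      obtain ⟨w, hwT, hw⟩ := hT (ZFam (x : ∀ l, D l))ᶜ
      have hyw : y * (⟨w, hwT⟩ : T) = 0 := hcompl0 _ _ hyx hw
      have : y * (⟨w, hwT⟩ : T) ∈ I := by rw [hyw]; exact I.zero_mem
      rcases hIp.mem_or_mem this with h | h
      · exact h
      · exact absurd ⟨⟨w, hwT⟩, h, hw⟩ (hPnot _ ⟨x, hxI, rfl⟩)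
    have hGsuper : ∀ {Z Z' : Set Λ}, ¬ P Zᶜ → Z ⊆ Z' → ¬ P Z'ᶜ := by
      rintro Z Z' hZ hsub ⟨b, hbI, hb⟩
      obtain ⟨c, hcT, hc⟩ := hT (Zᶜ ∩ Z')
      apply hZ
      refine ⟨b * ⟨c, hcT⟩, I.mul_mem_right _ hbI, ?_⟩
      rw [cmul, hb, show ZFam ((⟨c, hcT⟩ : T) : ∀ l, D l) = Zᶜ ∩ Z' from hc]
      ext l
      simp only [Set.mem_union, Set.mem_compl_iff, Set.mem_inter_iff]
      constructor
      · rintro (h | ⟨h, _⟩) hl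
        · exact h (hsub hl)
        · exact h hl
      · intro h
        rcases Classical.em (l ∈ Z') with h' | h'
        · exact Or.inr ⟨h, h'⟩
        · exact Or.inl h'
    have hGinter : ∀ {Z₁ Z₂ : Set Λ}, ¬ P Z₁ᶜ → ¬ P Z₂ᶜ → ¬ P (Z₁ ∩ Z₂)ᶜ := by
      rintro Z₁ Z₂ h1 h2 ⟨b, hbI, hb⟩
      obtain ⟨w₁, hw₁T, hw₁⟩ := hT Z₁ᶜ
      obtain ⟨w₂, hw₂T, hw₂⟩ := hT Z₂ᶜ
      have hmem : (⟨w₁, hw₁T⟩ : T) * ⟨w₂, hw₂T⟩ ∈ I := by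
        apply memOfZ b hbI
        rw [cmul, hb, show ZFam ((⟨w₁, hw₁T⟩ : T) : ∀ l, D l) = Z₁ᶜ from hw₁,
          show ZFam ((⟨w₂, hw₂T⟩ : T) : ∀ l, D l) = Z₂ᶜ from hw₂, Set.compl_inter]
      rcases hIp.mem_or_mem hmem with h | h
      · exact h1 ⟨_, h, hw₁⟩
      · exact h2 ⟨_, h, hw₂⟩
    let Gf : Filter Λ :=
      { sets := {Z | ¬ P Zᶜ}
        univ_sets := by
          simp only [Set.mem_setOf_eq, Set.compl_univ]
          rintro ⟨x, hxI, hx⟩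
          apply hC x _ hxI
          intro l
          exact hnz _ hx (Set.notMem_empty l)
        sets_of_superset := fun h hsub => hGsuper h hsub
        inter_sets := fun h1 h2 => hGinter h1 h2 }
    have hdich : ∀ Z, P Z ↔ ¬ P Zᶜ :=
      fun Z => ⟨fun h => hPnot Z h, fun h => (hPor Z).resolve_right h⟩
    refine ⟨Ultrafilter.ofComplNotMemIff Gf ?_, ?_⟩
    · intro s
      show ¬¬ P sᶜᶜ ↔ ¬ P sᶜ
      rw [compl_compl, not_not]
      exact hdich s
    · intro x
      show x ∈ I ↔ ¬ P (ZFam (x : ∀ l, D l))ᶜ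
      constructor
      · intro hx
        exact hPnot _ ⟨x, hx, rfl⟩
      · intro hx
        rcases hPor (ZFam (x : ∀ l, D l)) with ⟨y, hyI, hy⟩ | h
        · exact memOfZ y hyI x hy.symm
        · exact absurd h hx
end
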